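/- Let F be a field, n a natural number, and r : Fin n → Fin n → Prop a reflexive, transitive, antisymmetric relation such that r i j implies i ≤ j. Let S be the set of matrices M : Matrix (Fin n) (Fin n) F with M i j = 0 whenever ¬ r i j. Let e : Fin s → Matrix (Fin n) (Fin n) F be such that each e k ∈ S, each e k is idempotent (e k * e k = e k), and e k * e l = 0 for k ≠ l. Then there exist matrices M, N ∈ S with M*N = 1 and N*M = 1 such that N * (e k) * M is a diagonal matrix (Matrix.IsDiag) for every k. -/
import Mathlib

section IncidenceAux

variable {F : Type*} [Field F] {n : ℕ} {r : Fin n → Fin n → Prop}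

/-- The incidence algebra (as matrix entry condition) is closed under multiplication. -/
lemma incidence_mul_mem (htrans : ∀ i j k, r i j → r j k → r i k)
    {A B : Matrix (Fin n) (Fin n) F}
    (hA : ∀ i j, ¬ r i j → A i j = 0) (hB : ∀ i j, ¬ r i j → B i j = 0) :
    ∀ i j, ¬ r i j → (A * B) i j = 0 := by
  intro i j hij
  rw [Matrix.mul_apply]
  apply Finset.sum_eq_zero
  intro m _
  by_cases h1 : r i m
  · by_cases h2 : r m j
    · exact absurd (htrans _ _ _ h1 h2) hij
    · rw [hB _ _ h2, mul_zero]
  · rw [hA _ _ h1, zero_mul]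

/-- Diagonal entries of a product of incidence-algebra matrices multiply pointwise. -/
lemma incidence_diag_mul (hle : ∀ i j : Fin n, r i j → i ≤ j)
    {A B : Matrix (Fin n) (Fin n) F}
    (hA : ∀ i j, ¬ r i j → A i j = 0) (hB : ∀ i j, ¬ r i j → B i j = 0) (i : Fin n) :
    (A * B) i i = A i i * B i i := by
  rw [Matrix.mul_apply]
  apply Finset.sum_eq_single
  · intro m _ hm
    by_cases h1 : r i m
    · by_cases h2 : r m i
      · exact absurd (le_antisymm (hle _ _ h2) (hle _ _ h1)) hm
      · rw [hB _ _ h2, mul_zero]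
    · rw [hA _ _ h1, zero_mul]
  · intro h
    exact absurd (Finset.mem_univ i) h

/-- A strictly upper triangular n×n matrix is nilpotent of order n. -/
lemma strict_triangular_pow_eq_zero {Z : Matrix (Fin n) (Fin n) F}
    (hZ : ∀ i j : Fin n, Z i j ≠ 0 → (i : ℕ) < (j : ℕ)) : Z ^ n = 0 := by
  have key : ∀ m, ∀ i j : Fin n, (Z ^ m) i j ≠ 0 → (i : ℕ) + m ≤ (j : ℕ) := by
    intro m
    induction m with
    | zero =>
      intro i j h
      rw [pow_zero] at h
      by_cases hij : i = j
      · subst hij; omega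
      · rw [Matrix.one_apply_ne hij] at h; exact absurd rfl h
    | succ m ih =>
      intro i j h
      rw [pow_succ, Matrix.mul_apply] at h
      obtain ⟨t, -, ht⟩ := Finset.exists_ne_zero_of_sum_ne_zero h
      have h1 := ih i t (left_ne_zero_of_mul ht)
      have h2 := hZ t j (right_ne_zero_of_mul ht)
      omega
  ext i j
  by_contra h
  have h1 := key n i j (by simpa using h)
  have h2 := j.isLt
  omega

end IncidenceAux

/-- A family of pairwise orthogonal idempotents in the matrix realization of a finite
incidence algebra can be simultaneously diagonalized by a conjugation inside the algebra. -/
theorem orthogonal_idempotents_simultaneously_diagonalizable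
    {F : Type*} [Field F] {n s : ℕ} (r : Fin n → Fin n → Prop)
    (hrefl : ∀ i, r i i)
    (htrans : ∀ i j k, r i j → r j k → r i k)
    (hantisymm : ∀ i j, r i j → r j i → i = j)
    (hle : ∀ i j, r i j → i ≤ j)
    (e : Fin s → Matrix (Fin n) (Fin n) F)
    (he_mem : ∀ k, ∀ i j, ¬ r i j → e k i j = 0)
    (he_idem : ∀ k, e k * e k = e k)
    (he_orth : ∀ k l, k ≠ l → e k * e l = 0) :
    ∃ M N : Matrix (Fin n) (Fin n) F,
      (∀ i j, ¬ r i j → M i j = 0) ∧ (∀ i j, ¬ r i j → N i j = 0) ∧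
      M * N = 1 ∧ N * M = 1 ∧ ∀ k, (N * e k * M).IsDiag := by
  classical
  -- basic membership facts
  have hone_mem : ∀ i j, ¬ r i j → (1 : Matrix (Fin n) (Fin n) F) i j = 0 := by
    intro i j hij
    by_cases h : i = j
    · exact absurd (h ▸ hrefl i) hij
    · exact Matrix.one_apply_ne h
  have hdiag_mem : ∀ (d : Fin n → F), ∀ i j, ¬ r i j → Matrix.diagonal d i j = 0 := by
    intro d i j hij
    by_cases h : i = j
    · exact absurd (h ▸ hrefl i) hij
    · exact Matrix.diagonal_apply_ne d h
  obtain ⟨f, hf⟩ : ∃ f : Matrix (Fin n) (Fin n) F, f = ∑ k, e k := ⟨_, rfl⟩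
  obtain ⟨g, hg⟩ : ∃ g : Matrix (Fin n) (Fin n) F, g = 1 - f := ⟨_, rfl⟩
  obtain ⟨D, hD⟩ : ∃ D : Fin s → Matrix (Fin n) (Fin n) F,
      D = fun k => Matrix.diagonal (fun i => e k i i) := ⟨_, rfl⟩
  obtain ⟨Dg, hDg⟩ : ∃ Dg : Matrix (Fin n) (Fin n) F,
      Dg = Matrix.diagonal (fun i => g i i) := ⟨_, rfl⟩
  have hf_mem : ∀ i j, ¬ r i j → f i j = 0 := by
    intro i j hij
    rw [hf, Matrix.sum_apply]
    exact Finset.sum_eq_zero fun k _ => he_mem k i j hij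
  have hg_mem : ∀ i j, ¬ r i j → g i j = 0 := by
    intro i j hij
    rw [hg, Matrix.sub_apply, hone_mem i j hij, hf_mem i j hij, sub_zero]
  -- algebraic identities
  have hef : ∀ k, e k * f = e k := by
    intro k
    rw [hf, Finset.mul_sum]
    rw [Finset.sum_eq_single k (fun l _ hl => he_orth k l (Ne.symm hl))
      (fun h => absurd (Finset.mem_univ k) h)]
    exact he_idem k
  have hfe : ∀ k, f * e k = e k := by
    intro k
    rw [hf, Finset.sum_mul]
    rw [Finset.sum_eq_single k (fun l _ hl => he_orth l k hl)
      (fun h => absurd (Finset.mem_univ k) h)]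
    exact he_idem k
  have heg : ∀ k, e k * g = 0 := by
    intro k; rw [hg, mul_sub, mul_one, hef, sub_self]
  have hge : ∀ k, g * e k = 0 := by
    intro k; rw [hg, sub_mul, one_mul, hfe, sub_self]
  have hff : f * f = f := by
    nth_rewrite 1 [hf]
    rw [Finset.sum_mul, Finset.sum_congr rfl fun k _ => hef k, ← hf]
  have hgg : g * g = g := by
    rw [hg, sub_mul, one_mul, mul_sub, mul_one, hff]
    abel
  -- diagonal entries are idempotent
  have he_diag : ∀ k i, e k i i * e k i i = e k i i := by
    intro k i
    rw [← incidence_diag_mul hle (he_mem k) (he_mem k), he_idem k]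
  have hg_diag : ∀ i, g i i * g i i = g i i := by
    intro i
    rw [← incidence_diag_mul hle hg_mem hg_mem, hgg]
  have he_orth_diag : ∀ k l, k ≠ l → ∀ i, e k i i * e l i i = 0 := by
    intro k l hkl i
    rw [← incidence_diag_mul hle (he_mem k) (he_mem l), he_orth k l hkl]
    simp
  have hge_diag : ∀ k i, g i i * e k i i = 0 := by
    intro k i
    rw [← incidence_diag_mul hle hg_mem (he_mem k), hge k]
    simp
  -- the conjugating matrix
  obtain ⟨M, hM⟩ : ∃ M : Matrix (Fin n) (Fin n) F,
      M = (∑ k, e k * D k) + g * Dg := ⟨_, rfl⟩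
  have hM_mem : ∀ i j, ¬ r i j → M i j = 0 := by
    intro i j hij
    rw [hM, Matrix.add_apply, Matrix.sum_apply]
    rw [Finset.sum_eq_zero fun k _ =>
      incidence_mul_mem htrans (he_mem k) (by rw [hD]; exact hdiag_mem _) i j hij]
    rw [incidence_mul_mem htrans hg_mem (by rw [hDg]; exact hdiag_mem _) i j hij, add_zero]
  have hM_diag : ∀ i, M i i = 1 := by
    intro i
    rw [hM, Matrix.add_apply, Matrix.sum_apply]
    have h1 : ∀ k : Fin s, (e k * D k) i i = e k i i := by
      intro k
      rw [hD, Matrix.mul_diagonal]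
      exact he_diag k i
    rw [Finset.sum_congr rfl fun k _ => h1 k]
    rw [hDg, Matrix.mul_diagonal, hg_diag i]
    have h2 : (∑ k, e k i i) = f i i := by rw [hf, Matrix.sum_apply]
    rw [h2, hg, Matrix.sub_apply, Matrix.one_apply_eq]
    ring
  -- key identity : e k * M = M * D k
  have hkey : ∀ k, e k * M = M * D k := by
    intro k
    have hDD : ∀ l, D l * D k = if l = k then D k else 0 := by
      intro l
      rw [hD]
      simp only [Matrix.diagonal_mul_diagonal]
      by_cases hlk : l = k
      · subst hlk
        rw [if_pos rfl]
        have h0 : (fun i => e l i i * e l i i) = fun i => e l i i := funext (he_diag l)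
        rw [h0]
      · rw [if_neg hlk]
        have h0 : (fun i => e l i i * e k i i) = fun _ => (0 : F) := by
          funext i; exact he_orth_diag l k hlk i
        rw [h0, Matrix.diagonal_zero]
    have hDgD : Dg * D k = 0 := by
      rw [hDg, hD, Matrix.diagonal_mul_diagonal]
      have h0 : (fun i => g i i * e k i i) = fun _ => (0 : F) := by
        funext i; exact hge_diag k i
      rw [h0, Matrix.diagonal_zero]
    calc e k * M = (∑ l, e k * e l * D l) + e k * g * Dg := by
          rw [hM, mul_add, Finset.mul_sum, mul_assoc (e k) g Dg]
          congr 1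
          exact Finset.sum_congr rfl fun l _ => (mul_assoc _ _ _).symm
      _ = e k * D k := by
          rw [heg, zero_mul, add_zero]
          rw [Finset.sum_eq_single k
            (fun l _ hl => by rw [he_orth k l (fun h => hl h.symm), zero_mul])
            (fun h => absurd (Finset.mem_univ k) h), he_idem k]
      _ = (∑ l, e l * (D l * D k)) + g * (Dg * D k) := by
          rw [hDgD, mul_zero, add_zero]
          rw [Finset.sum_congr rfl fun l (_ : l ∈ Finset.univ) => by rw [hDD l]]
          rw [Finset.sum_eq_single k
            (fun l _ hl => by rw [if_neg hl, mul_zero])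
            (fun h => absurd (Finset.mem_univ k) h), if_pos rfl]
      _ = M * D k := by
          rw [hM, add_mul, Finset.sum_mul, mul_assoc g Dg (D k)]
          congr 1
          exact Finset.sum_congr rfl fun l _ => (mul_assoc _ _ _).symm
  -- the nilpotent part
  obtain ⟨Z, hZ⟩ : ∃ Z : Matrix (Fin n) (Fin n) F, Z = M - 1 := ⟨_, rfl⟩
  have hZ_mem : ∀ i j, ¬ r i j → Z i j = 0 := by
    intro i j hij
    rw [hZ, Matrix.sub_apply, hM_mem i j hij, hone_mem i j hij, sub_zero]
  have hZ_strict : ∀ i j : Fin n, Z i j ≠ 0 → (i : ℕ) < (j : ℕ) := by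
    intro i j hij
    by_cases h : i = j
    · subst h
      rw [hZ, Matrix.sub_apply, hM_diag i, Matrix.one_apply_eq, sub_self] at hij
      exact absurd rfl hij
    · by_cases hr : r i j
      · have h1 := hle i j hr
        have h2 : (i : ℕ) ≠ (j : ℕ) := fun hc => h (Fin.ext hc)
        omega
      · exact absurd (hZ_mem i j hr) hij
  have hZn : Z ^ n = 0 := strict_triangular_pow_eq_zero hZ_strict
  -- the inverse via geometric series
  obtain ⟨N, hN⟩ : ∃ N : Matrix (Fin n) (Fin n) F,
      N = ∑ m ∈ Finset.range n, (-Z) ^ m := ⟨_, rfl⟩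
  have hnegZ : -Z - 1 = -M := by rw [hZ]; abel
  have hnegZn : (-Z) ^ n = 0 := by rw [neg_pow, hZn, mul_zero]
  have hNM : N * M = 1 := by
    have h1 := geom_sum_mul (-Z) n
    rw [hnegZ, hnegZn, ← hN] at h1
    have h2 : N * -M = -1 := by rw [h1]; abel
    calc N * M = -(N * -M) := by rw [mul_neg, neg_neg]
      _ = 1 := by rw [h2, neg_neg]
  have hMN : M * N = 1 := by
    have h1 := mul_geom_sum (-Z) n
    rw [hnegZ, hnegZn, ← hN] at h1
    have h2 : -M * N = -1 := by rw [h1]; abel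
    calc M * N = -(-M * N) := by rw [neg_mul, neg_neg]
      _ = 1 := by rw [h2, neg_neg]
  have hN_mem : ∀ i j, ¬ r i j → N i j = 0 := by
    have hpow : ∀ m : ℕ, ∀ i j, ¬ r i j → ((-Z) ^ m) i j = 0 := by
      intro m
      induction m with
      | zero => simpa using hone_mem
      | succ m ih =>
        intro i j hij
        rw [pow_succ]
        refine incidence_mul_mem htrans ih ?_ i j hij
        intro a b hab
        rw [Matrix.neg_apply, hZ_mem a b hab, neg_zero]
    intro i j hij
    rw [hN, Matrix.sum_apply]
    exact Finset.sum_eq_zero fun m _ => hpow m i j hij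
  refine ⟨M, N, hM_mem, hN_mem, hMN, hNM, fun k => ?_⟩
  rw [mul_assoc, hkey k, ← mul_assoc, hNM, one_mul, hD]
  exact Matrix.isDiag_diagonal _
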